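/- arXiv:1704.06887 — 4 statements merged into one kernel-verified Lean document; each statement's English description precedes it below -/
import Mathlib

section
/- Let F be a field of characteristic 2, let (A,σ) be a central simple F-algebra with orthogonal involution, and let K/F be a separable quadratic field extension (i.e. [K:F] = 2 and K/F is separable). Then S(A_K, σ_K) equals the K-subspace of A_K = A ⊗_F K spanned by the elements x ⊗ 1 with x ∈ S(A,σ). -/
open scoped TensorProduct

/-- `Alt(A,σ) = {x - σ(x) : x ∈ A}`. -/
def altSet {F A : Type*} [Field F] [Ring A] [Algebra F A] (σ : A →ₗ[F] A) : Set A :=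
  {y | ∃ x : A, y = x - σ x}

/-- `S(A,σ) = {x ∈ A : σ(x)x ∈ F·1 + Alt(A,σ)}`. -/
def sSet {F A : Type*} [Field F] [Ring A] [Algebra F A] (σ : A →ₗ[F] A) : Set A :=
  {x | ∃ α : F, σ x * x - algebraMap F A α ∈ altSet σ}

/-- An involution of the first kind is orthogonal if `Alt(A,σ) ∩ F·1 = {0}`. -/
def IsOrthogonal {F A : Type*} [Field F] [Ring A] [Algebra F A] (σ : A →ₗ[F] A) : Prop :=
  altSet σ ∩ Set.range (algebraMap F A) = {0}

section Aux

variable {F A : Type*} [Field F] [Ring A] [Algebra F A]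

lemma char2_self_add [CharP F 2] {M : Type*} [AddCommGroup M] [Module F M] (x : M) :
    x + x = 0 := by
  have h : (1 + 1 : F) = 0 := by
    have := CharP.cast_eq_zero F 2
    rwa [Nat.cast_ofNat, ← one_add_one_eq_two] at this
  calc x + x = (1 + 1 : F) • x := by rw [add_smul, one_smul]
    _ = 0 := by rw [h, zero_smul]

lemma char2_sub [CharP F 2] {M : Type*} [AddCommGroup M] [Module F M] (x y : M) :
    x - y = x + y := by
  rw [sub_eq_add_neg, neg_eq_of_add_eq_zero_left (char2_self_add (F := F) y)]

lemma alt_add (σ : A →ₗ[F] A) {y₁ y₂ : A} (h₁ : y₁ ∈ altSet σ) (h₂ : y₂ ∈ altSet σ) :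
    y₁ + y₂ ∈ altSet σ := by
  obtain ⟨x₁, rfl⟩ := h₁; obtain ⟨x₂, rfl⟩ := h₂
  exact ⟨x₁ + x₂, by rw [map_add]; abel⟩

lemma alt_sub (σ : A →ₗ[F] A) {y₁ y₂ : A} (h₁ : y₁ ∈ altSet σ) (h₂ : y₂ ∈ altSet σ) :
    y₁ - y₂ ∈ altSet σ := by
  obtain ⟨x₁, rfl⟩ := h₁; obtain ⟨x₂, rfl⟩ := h₂
  exact ⟨x₁ - x₂, by rw [map_sub]; abel⟩

lemma alt_smul (σ : A →ₗ[F] A) (c : F) {y : A} (h : y ∈ altSet σ) : c • y ∈ altSet σ := by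
  obtain ⟨x, rfl⟩ := h
  exact ⟨c • x, by rw [map_smul, smul_sub]⟩

lemma sSet_smul (σ : A →ₗ[F] A) (c : F) {x : A} (hx : x ∈ sSet σ) : c • x ∈ sSet σ := by
  obtain ⟨α, u, hu⟩ := hx
  refine ⟨c * c * α, (c * c) • u, ?_⟩
  rw [map_smul, map_smul, smul_mul_smul_comm, map_mul, ← Algebra.smul_def, ← smul_sub, ← smul_sub,
    hu]

lemma sSet_add [CharP F 2] (σ : A →ₗ[F] A) (hmul : ∀ x y : A, σ (x * y) = σ y * σ x)
    (hinv : ∀ x : A, σ (σ x) = x) {x y : A} (hx : x ∈ sSet σ) (hy : y ∈ sSet σ) :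
    x + y ∈ sSet σ := by
  obtain ⟨α, hα⟩ := hx
  obtain ⟨β, hβ⟩ := hy
  refine ⟨α + β, ?_⟩
  have h3 : σ x * y + σ y * x ∈ altSet σ := by
    refine ⟨σ y * x, ?_⟩
    rw [hmul, hinv, char2_sub (F := F), add_comm]
  have h4 := alt_add σ (alt_add σ hα hβ) h3
  have heq : σ x * x - algebraMap F A α + (σ y * y - algebraMap F A β) + (σ x * y + σ y * x)
      = σ (x + y) * (x + y) - algebraMap F A (α + β) := by
    rw [map_add σ, map_add (algebraMap F A), add_mul, mul_add, mul_add]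
    abel
  rwa [heq] at h4

lemma sSet_zero (σ : A →ₗ[F] A) : (0 : A) ∈ sSet σ :=
  ⟨0, 0, by simp⟩

end Aux

theorem stmt1 {F A K : Type*} [Field F] [CharP F 2] [Ring A] [Algebra F A]
    [FiniteDimensional F A]
    (hcentral : ∀ z : A, (∀ y : A, z * y = y * z) → ∃ a : F, algebraMap F A a = z)
    (hsimple : IsSimpleOrder (TwoSidedIdeal A))
    (σ : A →ₗ[F] A) (hmul : ∀ x y : A, σ (x * y) = σ y * σ x) (hinv : ∀ x : A, σ (σ x) = x)
    (horth : IsOrthogonal σ)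
    [Field K] [Algebra F K] [Algebra.IsSeparable F K] (hdeg : Module.finrank F K = 2) :
    sSet (LinearMap.baseChange K σ) =
      ↑(Submodule.span K ((fun x : A => (1 : K) ⊗ₜ[F] x) '' sSet σ)) := by
  classical
  haveI : CharP K 2 := charP_of_injective_algebraMap (algebraMap F K).injective 2
  haveI : FiniteDimensional F K := Module.finite_of_finrank_eq_succ (n := 1) (by rw [hdeg])
  set τ := LinearMap.baseChange K σ with hτdef
  have hτtmul : ∀ (k : K) (w : A), τ (k ⊗ₜ[F] w) = k ⊗ₜ[F] σ w := fun k w => rfl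
  have hτmul : ∀ x y : K ⊗[F] A, τ (x * y) = τ y * τ x := by
    intro x y
    induction x using TensorProduct.induction_on with
    | zero => simp
    | tmul k w =>
      induction y using TensorProduct.induction_on with
      | zero => simp
      | tmul k' w' =>
        simp only [Algebra.TensorProduct.tmul_mul_tmul, hτtmul, hmul, mul_comm k k']
      | add y1 y2 h1 h2 => rw [mul_add, map_add, h1, h2, map_add, add_mul]
    | add x1 x2 h1 h2 => rw [add_mul, map_add, h1, h2, map_add, mul_add]
  have hτinv : ∀ x : K ⊗[F] A, τ (τ x) = x := by
    intro x
    induction x using TensorProduct.induction_on with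
    | zero => simp
    | tmul k w => rw [hτtmul, hτtmul, hinv]
    | add x1 x2 h1 h2 => rw [map_add, map_add, h1, h2]
  -- pick δ outside F
  obtain ⟨δ, hδ⟩ : ∃ δ : K, δ ∉ Set.range (algebraMap F K) := by
    by_contra hcon
    push_neg at hcon
    have hbt : (⊥ : Subalgebra F K) = ⊤ := by
      rw [eq_top_iff]
      intro x _
      exact Algebra.mem_bot.2 (hcon x)
    have h1 : Module.finrank F K = 1 := Subalgebra.bot_eq_top_iff_finrank_eq_one.mp hbt
    omega
  have li : LinearIndependent F ![δ, (1 : K)] := by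
    rw [linearIndependent_fin2]
    constructor
    · simp
    · intro c
      simp only [Matrix.cons_val_one, Matrix.head_cons, Matrix.cons_val_zero]
      intro hc
      exact hδ ⟨c, by rwa [Algebra.algebraMap_eq_smul_one]⟩
  let b : Module.Basis (Fin 2) F K := basisOfLinearIndependentOfCardEqFinrank li (by simp [hdeg])
  have hb : ⇑b = ![δ, (1 : K)] := coe_basisOfLinearIndependentOfCardEqFinrank li _
  have hb0 : b 0 = δ := by rw [hb]; rfl
  have hb1 : b 1 = (1 : K) := by rw [hb]; rfl
  have hd0 : b.repr δ 0 = 1 := by rw [← hb0, b.repr_self]; simp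
  have hd1 : b.repr δ 1 = 0 := by rw [← hb0, b.repr_self]; simp
  have h10 : b.repr (1 : K) 0 = 0 := by rw [← hb1, b.repr_self]; simp
  have h11 : b.repr (1 : K) 1 = 1 := by rw [← hb1, b.repr_self]; simp
  set bb := b.repr (δ * δ) 0 with hbbdef
  set aa := b.repr (δ * δ) 1 with haadef
  have hδδ : δ * δ = bb • δ + aa • (1 : K) := by
    conv_lhs => rw [← b.sum_repr (δ * δ)]
    rw [Fin.sum_univ_two, hb0, hb1]
  -- separability gives bb ≠ 0
  have hbb : bb ≠ 0 := by
    intro h0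
    have hint : IsIntegral F δ := IsIntegral.of_finite F δ
    have hroot : (Polynomial.aeval δ) (Polynomial.X ^ 2 - Polynomial.C aa) = 0 := by
      rw [map_sub, Polynomial.aeval_X_pow, Polynomial.aeval_C, sq, hδδ, h0, zero_smul, zero_add,
        Algebra.algebraMap_eq_smul_one, sub_self]
    set p := minpoly F δ with hp
    have hdvd : p ∣ Polynomial.X ^ 2 - Polynomial.C aa := minpoly.dvd F δ hroot
    have hqmonic : (Polynomial.X ^ 2 - Polynomial.C aa).Monic :=
      Polynomial.monic_X_pow_sub_C aa two_ne_zero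
    have hq0 : (Polynomial.X ^ 2 - Polynomial.C aa) ≠ 0 := hqmonic.ne_zero
    have hpmonic : p.Monic := minpoly.monic hint
    have hirr : Irreducible p := minpoly.irreducible hint
    have hsep : p.Separable := Algebra.IsSeparable.isSeparable F δ
    have hle : p.natDegree ≤ 2 := by
      have := Polynomial.natDegree_le_of_dvd hdvd hq0
      rwa [Polynomial.natDegree_X_pow_sub_C] at this
    have hge : 0 < p.natDegree := minpoly.natDegree_pos hint
    have hne1 : p.natDegree ≠ 1 := by
      intro h1
      have hform := hpmonic.eq_X_add_C h1
      have : (Polynomial.aeval δ) p = 0 := minpoly.aeval F δ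
      rw [hform, map_add, Polynomial.aeval_X, Polynomial.aeval_C] at this
      exact hδ ⟨-(p.coeff 0), by rw [map_neg, neg_eq_iff_add_eq_zero, add_comm]; exact this⟩
    have h2 : p.natDegree = 2 := by omega
    obtain ⟨r, hr⟩ := hdvd
    have hp0 : p ≠ 0 := hpmonic.ne_zero
    have hr0 : r ≠ 0 := by rintro rfl; rw [mul_zero] at hr; exact hq0 hr
    have hrdeg : r.natDegree = 0 := by
      have := Polynomial.natDegree_mul hp0 hr0
      rw [← hr, Polynomial.natDegree_X_pow_sub_C, h2] at this
      omega
    have hrC : r = Polynomial.C (r.coeff 0) := Polynomial.eq_C_of_natDegree_eq_zero hrdeg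
    have hc0 : r.coeff 0 ≠ 0 := by
      intro h
      rw [h, map_zero] at hrC
      exact hr0 hrC
    have hderq : Polynomial.derivative (Polynomial.X ^ 2 - Polynomial.C aa) = 0 := by
      rw [Polynomial.derivative_sub, Polynomial.derivative_C, Polynomial.derivative_X_pow]
      have h2F : ((2 : ℕ) : F) = 0 := CharP.cast_eq_zero F 2
      rw [h2F]
      simp
    rw [hr, hrC, Polynomial.derivative_mul, Polynomial.derivative_C, mul_zero, add_zero] at hderq
    have hdp : Polynomial.derivative p = 0 := by
      rcases mul_eq_zero.mp hderq with h | h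
      · exact h
      · exact absurd (Polynomial.C_eq_zero.mp h) hc0
    exact (Polynomial.separable_iff_derivative_ne_zero hirr).mp hsep hdp
  -- coordinate maps
  let φ : Fin 2 → (K ⊗[F] A →ₗ[F] A) := fun i =>
    (TensorProduct.lid F A).toLinearMap ∘ₗ (TensorProduct.map (b.coord i) LinearMap.id)
  have hφt : ∀ (i : Fin 2) (k : K) (w : A), φ i (k ⊗ₜ[F] w) = b.repr k i • w := by
    intro i k w
    simp [φ, Module.Basis.coord_apply]
  have hφσ : ∀ (i : Fin 2) (z : K ⊗[F] A), φ i (τ z) = σ (φ i z) := by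
    intro i z
    induction z using TensorProduct.induction_on with
    | zero => simp
    | tmul k w => rw [hτtmul, hφt, hφt, map_smul]
    | add z1 z2 h1 h2 => rw [map_add, map_add, map_add, map_add, h1, h2]
  have hφalg : ∀ (i : Fin 2) (γ : K),
      φ i (algebraMap K (K ⊗[F] A) γ) = algebraMap F A (b.repr γ i) := by
    intro i γ
    rw [Algebra.TensorProduct.algebraMap_apply]
    simp only [Algebra.algebraMap_self, RingHom.id_apply]
    rw [hφt, Algebra.algebraMap_eq_smul_one]
  have hdec : ∀ z : K ⊗[F] A, z = δ ⊗ₜ[F] (φ 0 z) + (1 : K) ⊗ₜ[F] (φ 1 z) := by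
    intro z
    induction z using TensorProduct.induction_on with
    | zero => simp
    | tmul k w =>
      have hk : b.repr k 0 • δ + b.repr k 1 • (1 : K) = k := by
        conv_rhs => rw [← b.sum_repr k]
        rw [Fin.sum_univ_two, hb0, hb1]
      rw [hφt, hφt, TensorProduct.tmul_smul, TensorProduct.tmul_smul,
        TensorProduct.smul_tmul', TensorProduct.smul_tmul', ← TensorProduct.add_tmul, hk]
    | add z1 z2 h1 h2 =>
      rw [map_add, map_add, TensorProduct.tmul_add, TensorProduct.tmul_add]
      conv_lhs => rw [h1, h2]
      abel
  refine Set.Subset.antisymm ?_ ?_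
  · -- hard direction
    rintro z ⟨γ, w, hw⟩
    set x₁ := φ 0 z with hx₁def
    set x₂ := φ 1 z with hx₂def
    have hz : z = δ ⊗ₜ[F] x₁ + (1 : K) ⊗ₜ[F] x₂ := hdec z
    have hτz : τ z = δ ⊗ₜ[F] σ x₁ + (1 : K) ⊗ₜ[F] σ x₂ := by
      conv_lhs => rw [hz]
      rw [map_add, hτtmul, hτtmul]
    have key : ∀ i : Fin 2, φ i (τ z * z) =
        b.repr (δ * δ) i • (σ x₁ * x₁) + b.repr δ i • (σ x₁ * x₂)
          + b.repr δ i • (σ x₂ * x₁) + b.repr (1 : K) i • (σ x₂ * x₂) := by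
      intro i
      rw [hτz]
      conv_lhs => rw [hz]
      rw [add_mul, mul_add, mul_add]
      simp only [Algebra.TensorProduct.tmul_mul_tmul, one_mul, mul_one, map_add, hφt]
      abel
    have h0 : bb • (σ x₁ * x₁) + σ x₁ * x₂ + σ x₂ * x₁ - algebraMap F A (b.repr γ 0)
        ∈ altSet σ := by
      refine ⟨φ 0 w, ?_⟩
      have hcon := congrArg (φ 0) hw
      rw [map_sub, map_sub, key 0, hφσ 0, hφalg 0, hd0, h10, one_smul, one_smul, zero_smul, add_zero]
        at hcon
      rw [← hbbdef] at hcon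
      exact hcon
    have h1 : aa • (σ x₁ * x₁) + σ x₂ * x₂ - algebraMap F A (b.repr γ 1) ∈ altSet σ := by
      refine ⟨φ 1 w, ?_⟩
      have hcon := congrArg (φ 1) hw
      rw [map_sub, map_sub, key 1, hφσ 1, hφalg 1, hd1, h11, one_smul, zero_smul, add_zero,
        zero_smul, add_zero] at hcon
      rw [← haadef] at hcon
      exact hcon
    have hcross : σ x₁ * x₂ + σ x₂ * x₁ ∈ altSet σ := by
      refine ⟨σ x₂ * x₁, ?_⟩
      rw [hmul, hinv, char2_sub (F := F), add_comm]
    have h0' : bb • (σ x₁ * x₁) - algebraMap F A (b.repr γ 0) ∈ altSet σ := by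
      have hs := alt_sub σ h0 hcross
      have heq : bb • (σ x₁ * x₁) + σ x₁ * x₂ + σ x₂ * x₁ - algebraMap F A (b.repr γ 0)
          - (σ x₁ * x₂ + σ x₂ * x₁) = bb • (σ x₁ * x₁) - algebraMap F A (b.repr γ 0) := by
        abel
      rwa [heq] at hs
    have hx₁S : x₁ ∈ sSet σ := by
      refine ⟨bb⁻¹ * b.repr γ 0, ?_⟩
      have hs := alt_smul σ bb⁻¹ h0'
      rwa [smul_sub, smul_smul, inv_mul_cancel₀ hbb, one_smul, Algebra.smul_def, ← map_mul]
        at hs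
    obtain ⟨α, hα⟩ := id hx₁S
    have hscaled : aa • (σ x₁ * x₁) - algebraMap F A (aa * α) ∈ altSet σ := by
      have hs := alt_smul σ aa hα
      rw [smul_sub] at hs
      rwa [map_mul, ← Algebra.smul_def]
    have hx₂S : x₂ ∈ sSet σ := by
      refine ⟨b.repr γ 1 - aa * α, ?_⟩
      have hs := alt_sub σ h1 hscaled
      have heq : aa • (σ x₁ * x₁) + σ x₂ * x₂ - algebraMap F A (b.repr γ 1)
          - (aa • (σ x₁ * x₁) - algebraMap F A (aa * α))
          = σ x₂ * x₂ - algebraMap F A (b.repr γ 1 - aa * α) := by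
        rw [map_sub]
        abel
      rwa [heq] at hs
    rw [SetLike.mem_coe, hz]
    refine Submodule.add_mem _ ?_ (Submodule.subset_span ⟨x₂, hx₂S, rfl⟩)
    have hδsmul : δ ⊗ₜ[F] x₁ = δ • ((1 : K) ⊗ₜ[F] x₁) := by
      rw [TensorProduct.smul_tmul', smul_eq_mul, mul_one]
    rw [hδsmul]
    exact Submodule.smul_mem _ δ (Submodule.subset_span ⟨x₁, hx₁S, rfl⟩)
  · -- easy direction
    have hT : Submodule.span K ((fun x : A => (1 : K) ⊗ₜ[F] x) '' sSet σ) ≤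
        ({ carrier := sSet τ,
           add_mem' := fun hx hy => sSet_add τ hτmul hτinv hx hy,
           zero_mem' := sSet_zero τ,
           smul_mem' := fun c x hx => sSet_smul τ c hx } : Submodule K (K ⊗[F] A)) := by
      rw [Submodule.span_le]
      rintro _ ⟨x, hx, rfl⟩
      obtain ⟨α, u, hu⟩ := hx
      refine ⟨algebraMap F K α, (1 : K) ⊗ₜ[F] u, ?_⟩
      have hprod : τ ((1 : K) ⊗ₜ[F] x) * ((1 : K) ⊗ₜ[F] x) = (1 : K) ⊗ₜ[F] (σ x * x) := by
        rw [hτtmul, Algebra.TensorProduct.tmul_mul_tmul, one_mul]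
      have halg : algebraMap K (K ⊗[F] A) (algebraMap F K α)
          = (1 : K) ⊗ₜ[F] (algebraMap F A α) := by
        rw [← IsScalarTower.algebraMap_apply, Algebra.TensorProduct.algebraMap_apply']
      rw [hprod, halg, ← TensorProduct.tmul_sub, hu, TensorProduct.tmul_sub, hτtmul]
    exact fun z hz => hT hz
end

section
/- Let F be a field of characteristic 2, let (A,σ) be a central simple F-algebra with orthogonal involution, and let K/F be a finite field extension of odd degree. Then S(A_K, σ_K) equals the K-subspace of A_K = A ⊗_F K spanned by the elements x ⊗ 1 with x ∈ S(A,σ). -/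
open scoped TensorProduct

/- ### Auxiliary lemmas -/

lemma squares_span_aux (F K : Type*) [Field F] [CharP F 2] [Field K] [Algebra F K]
    [FiniteDimensional F K] (hodd : Odd (Module.finrank F K)) :
    Submodule.span F (Set.range fun c : K => c ^ 2) = ⊤ := by
  set V := Submodule.span F (Set.range fun c : K => c ^ 2) with hV
  have h1 : (1 : K) ∈ V := Submodule.subset_span ⟨1, by simp⟩
  have hmulmem : ∀ x ∈ V, ∀ y ∈ V, x * y ∈ V := by
    intro x hx y hy
    have h2 : V * V ≤ V := by
      rw [hV, Submodule.span_mul_span]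
      apply Submodule.span_mono
      rintro - ⟨-, ⟨c, rfl⟩, -, ⟨d, rfl⟩, rfl⟩
      exact ⟨c * d, by ring⟩
    exact h2 (Submodule.mul_mem_mul hx hy)
  let K' : Subalgebra F K := V.toSubalgebra h1 fun x y hx hy => hmulmem x hx y hy
  have halg : K'.IsAlgebraic := by
    intro x hx
    exact (IsIntegral.of_finite F x).isAlgebraic
  let E : IntermediateField F K := halg.toIntermediateField
  have hall : ∀ c : K, c ∈ E := by
    intro c
    by_contra hc
    have hcsq : c ^ 2 ∈ E := Submodule.subset_span ⟨c, rfl⟩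
    haveI : FiniteDimensional E K := FiniteDimensional.right F E K
    have hint : IsIntegral E c := IsIntegral.of_finite E c
    set q : Polynomial E := Polynomial.X ^ 2 - Polynomial.C ⟨c ^ 2, hcsq⟩ with hq
    have hq0 : Polynomial.aeval c q = 0 := by
      simp [hq, IntermediateField.algebraMap_apply]
    have hdvd : minpoly E c ∣ q := minpoly.dvd E c hq0
    have hqne : q ≠ 0 := (Polynomial.monic_X_pow_sub_C _ two_ne_zero).ne_zero
    have hdegle : (minpoly E c).natDegree ≤ 2 := by
      have := Polynomial.natDegree_le_of_dvd hdvd hqne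
      rwa [hq, Polynomial.natDegree_X_pow_sub_C] at this
    have hdegpos : 0 < (minpoly E c).natDegree := minpoly.natDegree_pos hint
    have hdne1 : (minpoly E c).natDegree ≠ 1 := by
      intro h1
      have : (minpoly E c).degree = 1 := by
        rw [Polynomial.degree_eq_natDegree (minpoly.ne_zero hint), h1]; rfl
      obtain ⟨y, hy⟩ := (minpoly.degree_eq_one_iff).mp this
      exact hc (hy ▸ y.2)
    have hdeg2 : (minpoly E c).natDegree = 2 := by omega
    have hfin2 : Module.finrank E (IntermediateField.adjoin E {c} : IntermediateField E K) = 2 := by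
      rw [IntermediateField.adjoin.finrank hint, hdeg2]
    have hdvd2 : 2 ∣ Module.finrank F K := by
      have t1 : Module.finrank F E * Module.finrank E K = Module.finrank F K :=
        Module.finrank_mul_finrank F E K
      have t2 : Module.finrank E (IntermediateField.adjoin E {c} : IntermediateField E K) *
          Module.finrank (IntermediateField.adjoin E {c} : IntermediateField E K) K
          = Module.finrank E K :=
        Module.finrank_mul_finrank E (IntermediateField.adjoin E {c} : IntermediateField E K) K
      rw [hfin2] at t2
      exact ⟨Module.finrank F E *
        Module.finrank (IntermediateField.adjoin E {c} : IntermediateField E K) K, by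
          rw [← t1, ← t2]; ring⟩
    rw [Nat.odd_iff] at hodd
    omega
  rw [eq_top_iff]
  intro x _
  exact hall x

lemma sq_basis_aux (F K : Type*) [Field F] [CharP F 2] [Field K] [Algebra F K]
    [FiniteDimensional F K] (hodd : Odd (Module.finrank F K)) :
    ∃ b2 : Module.Basis (Fin (Module.finrank F K)) F K,
      ∀ i, b2 i = (Module.finBasis F K) i ^ 2 := by
  haveI : CharP K 2 := charP_of_injective_algebraMap (algebraMap F K).injective 2
  set b := Module.finBasis F K with hb
  have hspan : ⊤ ≤ Submodule.span F (Set.range fun i => b i ^ 2) := by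
    rw [← squares_span_aux F K hodd]
    apply Submodule.span_le.mpr
    rintro - ⟨c, rfl⟩
    set a := b.repr c with ha
    have hc : ∑ i, a i • b i = c := b.sum_repr c
    show c ^ 2 ∈ _
    have : c ^ 2 = ∑ i, (a i) ^ 2 • (b i ^ 2) := by
      rw [← hc, CharTwo.sum_sq]
      exact Finset.sum_congr rfl fun i _ => smul_pow _ _ _
    rw [this]
    exact Submodule.sum_mem _ fun i _ =>
      Submodule.smul_mem _ _ (Submodule.subset_span ⟨i, rfl⟩)
  refine ⟨basisOfTopLeSpanOfCardEqFinrank (fun i => b i ^ 2) hspan (by simp), ?_⟩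
  intro i
  rw [coe_basisOfTopLeSpanOfCardEqFinrank]

section coords
variable {F K A : Type*} [Field F] [Field K] [Algebra F K] [Ring A] [Algebra F A]

noncomputable def gmap (f : K →ₗ[F] F) : K ⊗[F] A →ₗ[F] A :=
  (TensorProduct.lid F A).toLinearMap ∘ₗ LinearMap.rTensor A f

lemma gmap_tmul (f : K →ₗ[F] F) (k : K) (a : A) : gmap f (k ⊗ₜ[F] a) = f k • a := by
  simp [gmap]

lemma gmap_sum_repr {ι : Type*} [Fintype ι] (b : Module.Basis ι F K) (x : K ⊗[F] A) :
    ∑ i, b i ⊗ₜ[F] gmap (b.coord i) x = x := by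
  induction x using TensorProduct.induction_on with
  | zero => simp
  | tmul k a =>
      simp only [gmap_tmul, Module.Basis.coord_apply]
      have : ∀ i, b i ⊗ₜ[F] (b.repr k i • a) = (b.repr k i • b i) ⊗ₜ[F] a := by
        intro i
        rw [TensorProduct.tmul_smul, TensorProduct.smul_tmul']
      rw [Finset.sum_congr rfl fun i _ => this i, ← TensorProduct.sum_tmul, b.sum_repr]
  | add x y hx hy =>
      simp only [map_add, TensorProduct.tmul_add, Finset.sum_add_distrib, hx, hy]

lemma gmap_mem_of_mem_baseChange (f : K →ₗ[F] F) (N : Submodule F A) {x : K ⊗[F] A}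
    (hx : x ∈ N.baseChange K) : gmap f x ∈ N := by
  have key : ∀ k : K, gmap f (k • x) ∈ N := by
    rw [Submodule.baseChange_eq_span] at hx
    refine Submodule.span_induction ?_ ?_ ?_ ?_ hx
    · rintro - ⟨a, ha, rfl⟩
      intro k
      have : k • ((TensorProduct.mk F K A 1) a) = k ⊗ₜ[F] a := by
        simp [TensorProduct.mk_apply, TensorProduct.smul_tmul']
      rw [this, gmap_tmul]
      exact N.smul_mem _ ha
    · intro k; simp
    · intro x y _ _ hx hy k
      rw [smul_add, map_add]
      exact N.add_mem (hx k) (hy k)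
    · intro c x _ hx k
      rw [smul_smul]
      exact hx (k * c)
  simpa using key 1

lemma baseChange_mono' {p q : Submodule F A} (h : p ≤ q) :
    p.baseChange K ≤ q.baseChange K := by
  rw [Submodule.baseChange_eq_span]
  refine Submodule.span_le.mpr ?_
  rintro - ⟨m, hm, rfl⟩
  exact Submodule.tmul_mem_baseChange_of_mem 1 (h hm)

end coords

theorem stmt2 {F A K : Type*} [Field F] [CharP F 2] [Ring A] [Algebra F A]
    [FiniteDimensional F A]
    (hcentral : ∀ z : A, (∀ y : A, z * y = y * z) → ∃ a : F, algebraMap F A a = z)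
    (hsimple : IsSimpleOrder (TwoSidedIdeal A))
    (σ : A →ₗ[F] A) (hmul : ∀ x y : A, σ (x * y) = σ y * σ x) (hinv : ∀ x : A, σ (σ x) = x)
    (horth : IsOrthogonal σ)
    [Field K] [Algebra F K] [FiniteDimensional F K] (hodd : Odd (Module.finrank F K)) :
    sSet (LinearMap.baseChange K σ) =
      ↑(Submodule.span K ((fun x : A => (1 : K) ⊗ₜ[F] x) '' sSet σ)) := by
  have h2F : (2 : F) = 0 := by
    have := CharP.cast_eq_zero F 2
    exact_mod_cast this
  -- characteristic two facts
  have char2A : ∀ a : A, a + a = 0 := by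
    intro a
    rw [← two_smul F a, h2F, zero_smul]
  have char2K : ∀ x : K ⊗[F] A, x + x = 0 := by
    intro x
    rw [← two_smul F x, h2F, zero_smul]
  set σK := LinearMap.baseChange K σ with hσK
  set D : A →ₗ[F] A := LinearMap.id - σ with hD
  set DK : K ⊗[F] A →ₗ[K] K ⊗[F] A := LinearMap.id - σK with hDK
  have hDapp : ∀ x : A, D x = x - σ x := fun x => rfl
  have hDKapp : ∀ y : K ⊗[F] A, DK y = y - σK y := fun y => rfl
  -- submodules
  set W : Submodule F A := LinearMap.range D with hW
  set One : Submodule F A := LinearMap.range (Algebra.linearMap F A) with hOne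
  set T : Submodule F A := W ⊔ One with hT
  set WK : Submodule K (K ⊗[F] A) := LinearMap.range DK with hWK
  set OneK : Submodule K (K ⊗[F] A) := LinearMap.range (Algebra.linearMap K (K ⊗[F] A))
    with hOneK
  set TK : Submodule K (K ⊗[F] A) := WK ⊔ OneK with hTK
  -- alt sets as submodules
  have haltW : altSet σ = (W : Set A) := by
    ext y
    constructor
    · rintro ⟨x, rfl⟩; exact ⟨x, (hDapp x)⟩
    · rintro ⟨x, rfl⟩; exact ⟨x, (hDapp x).symm⟩
  have haltWK : altSet σK = (WK : Set (K ⊗[F] A)) := by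
    ext y
    constructor
    · rintro ⟨x, rfl⟩; exact ⟨x, (hDKapp x)⟩
    · rintro ⟨x, rfl⟩; exact ⟨x, (hDKapp x).symm⟩
  -- membership reformulations
  have hS : ∀ x : A, x ∈ sSet σ ↔ σ x * x ∈ T := by
    intro x
    constructor
    · rintro ⟨α, hα⟩
      rw [haltW] at hα
      rw [hT, Submodule.mem_sup]
      exact ⟨σ x * x - algebraMap F A α, hα, algebraMap F A α, ⟨α, rfl⟩, by abel⟩
    · intro hx
      rw [hT, Submodule.mem_sup] at hx
      obtain ⟨y, hy, z, ⟨α, rfl⟩, hyz⟩ := hx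
      refine ⟨α, ?_⟩
      rw [haltW]
      have : σ x * x - Algebra.linearMap F A α = y := by rw [← hyz]; abel
      show σ x * x - algebraMap F A α ∈ W
      rw [show (algebraMap F A α : A) = Algebra.linearMap F A α from rfl, this]
      exact hy
  have hSK : ∀ x : K ⊗[F] A, x ∈ sSet σK ↔ σK x * x ∈ TK := by
    intro x
    constructor
    · rintro ⟨α, hα⟩
      rw [haltWK] at hα
      rw [hTK, Submodule.mem_sup]
      exact ⟨σK x * x - algebraMap K (K ⊗[F] A) α, hα,
        algebraMap K (K ⊗[F] A) α, ⟨α, rfl⟩, by abel⟩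
    · intro hx
      rw [hTK, Submodule.mem_sup] at hx
      obtain ⟨y, hy, z, ⟨α, rfl⟩, hyz⟩ := hx
      refine ⟨α, ?_⟩
      rw [haltWK]
      have : σK x * x - Algebra.linearMap K (K ⊗[F] A) α = y := by rw [← hyz]; abel
      show σK x * x - algebraMap K (K ⊗[F] A) α ∈ WK
      rw [show (algebraMap K (K ⊗[F] A) α) = Algebra.linearMap K (K ⊗[F] A) α from rfl, this]
      exact hy
  -- W ≤ T, One ≤ T
  have hWT : W ≤ T := le_sup_left
  have hOneT : One ≤ T := le_sup_right
  -- base change of T equals TK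
  have hWKle : WK ≤ Submodule.baseChange K W := by
    rintro - ⟨y, rfl⟩
    induction y using TensorProduct.induction_on with
    | zero => simp
    | tmul k a =>
        have : DK (k ⊗ₜ[F] a) = k ⊗ₜ[F] (D a) := by
          rw [hDKapp, hDapp, hσK, LinearMap.baseChange_tmul, TensorProduct.tmul_sub]
        rw [this]
        exact Submodule.tmul_mem_baseChange_of_mem k ⟨a, rfl⟩
    | add u v hu hv =>
        rw [map_add]
        exact Submodule.add_mem _ hu hv
  have hOneKle : OneK ≤ Submodule.baseChange K T := by
    rintro - ⟨k, rfl⟩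
    show algebraMap K (K ⊗[F] A) k ∈ _
    rw [Algebra.TensorProduct.algebraMap_apply]
    exact Submodule.tmul_mem_baseChange_of_mem _ (hOneT ⟨1, by simp⟩)
  have hTbc : Submodule.baseChange K T = TK := by
    apply le_antisymm
    · rw [Submodule.baseChange_eq_span]
      refine Submodule.span_le.mpr ?_
      rintro - ⟨t, ht, rfl⟩
      rw [SetLike.mem_coe, Submodule.mem_sup] at ht
      obtain ⟨w, ⟨x, rfl⟩, z, ⟨α, rfl⟩, rfl⟩ := ht
      show (1 : K) ⊗ₜ[F] (D x + Algebra.linearMap F A α) ∈ TK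
      rw [TensorProduct.tmul_add]
      apply Submodule.add_mem
      · apply Submodule.mem_sup_left
        refine ⟨(1 : K) ⊗ₜ[F] x, ?_⟩
        rw [hDKapp, hDapp, hσK, LinearMap.baseChange_tmul, TensorProduct.tmul_sub]
      · apply Submodule.mem_sup_right
        refine ⟨algebraMap F K α, ?_⟩
        show algebraMap K (K ⊗[F] A) (algebraMap F K α) = (1 : K) ⊗ₜ[F] (Algebra.linearMap F A α)
        rw [Algebra.TensorProduct.algebraMap_apply]
        show algebraMap F K α ⊗ₜ[F] (1 : A) = (1 : K) ⊗ₜ[F] (algebraMap F A α)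
        rw [Algebra.algebraMap_eq_smul_one (A := K), Algebra.algebraMap_eq_smul_one (A := A),
          TensorProduct.smul_tmul]
    · rw [hTK]
      apply sup_le
      · exact le_trans hWKle (baseChange_mono' hWT)
      · exact hOneKle
  -- multiplicativity and involution for σK
  have hmulK : ∀ u v : K ⊗[F] A, σK (u * v) = σK v * σK u := by
    intro u v
    induction u using TensorProduct.induction_on with
    | zero => simp
    | tmul k a =>
        induction v using TensorProduct.induction_on with
        | zero => simp
        | tmul k' a' =>
            simp only [Algebra.TensorProduct.tmul_mul_tmul, hσK, LinearMap.baseChange_tmul,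
              hmul, mul_comm k k']
        | add v1 v2 h1 h2 =>
            rw [mul_add, map_add, h1, h2, map_add, add_mul]
    | add u1 u2 h1 h2 =>
        rw [add_mul, map_add, h1, h2, map_add, mul_add]
  have hinvK : ∀ u : K ⊗[F] A, σK (σK u) = u := by
    intro u
    induction u using TensorProduct.induction_on with
    | zero => simp
    | tmul k a => simp [hσK, LinearMap.baseChange_tmul, hinv]
    | add u1 u2 h1 h2 => rw [map_add, map_add, h1, h2]
  -- polarization at K level
  have haltK : ∀ u v : K ⊗[F] A, σK u * v + σK v * u ∈ WK := by
    intro u v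
    refine ⟨σK u * v, ?_⟩
    rw [hDKapp]
    show σK u * v - σK (σK u * v) = σK u * v + σK v * u
    rw [hmulK, hinvK]
    have h := char2K (σK v * u)
    rw [sub_eq_add_neg, neg_eq_of_add_eq_zero_left h]
  -- quadratic sum lemma
  have hsum : ∀ (s : Finset (Fin (Module.finrank F K))) (u : Fin (Module.finrank F K) → K ⊗[F] A),
      σK (∑ i ∈ s, u i) * (∑ i ∈ s, u i) - ∑ i ∈ s, σK (u i) * u i ∈ WK := by
    intro s u
    induction s using Finset.induction_on with
    | empty => simp
    | @insert a s ha ih =>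
        rw [Finset.sum_insert ha, Finset.sum_insert ha, map_add]
        have expand : (σK (u a) + σK (∑ i ∈ s, u i)) * (u a + ∑ i ∈ s, u i) -
            (σK (u a) * u a + ∑ i ∈ s, σK (u i) * u i) =
            (σK (∑ i ∈ s, u i) * (∑ i ∈ s, u i) - ∑ i ∈ s, σK (u i) * u i) +
            (σK (u a) * (∑ i ∈ s, u i) + σK (∑ i ∈ s, u i) * u a) := by
          noncomm_ring
        rw [expand]
        exact Submodule.add_mem _ ih (haltK _ _)
  -- key computation
  set b := Module.finBasis F K with hb
  have hM3 : ∀ x : Fin (Module.finrank F K) → A,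
      σK (∑ i, b i ⊗ₜ[F] x i) * (∑ i, b i ⊗ₜ[F] x i) -
        ∑ i, (b i ^ 2) ⊗ₜ[F] (σ (x i) * x i) ∈ WK := by
    intro x
    have := hsum Finset.univ (fun i => b i ⊗ₜ[F] x i)
    have heq : ∀ i : Fin (Module.finrank F K),
        σK (b i ⊗ₜ[F] x i) * (b i ⊗ₜ[F] x i) = (b i ^ 2) ⊗ₜ[F] (σ (x i) * x i) := by
      intro i
      rw [hσK, LinearMap.baseChange_tmul, Algebra.TensorProduct.tmul_mul_tmul, sq]
    rwa [Finset.sum_congr rfl fun i _ => heq i] at this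
  -- S' is a submodule
  have haltF : ∀ u v : A, σ u * v + σ v * u ∈ W := by
    intro u v
    refine ⟨σ u * v, ?_⟩
    rw [hDapp]
    show σ u * v - σ (σ u * v) = σ u * v + σ v * u
    rw [hmul, hinv]
    have h := char2A (σ v * u)
    rw [sub_eq_add_neg, neg_eq_of_add_eq_zero_left h]
  set S' : Submodule F A :=
    { carrier := {x : A | σ x * x ∈ T}
      add_mem' := by
        intro x y hx hy
        show σ (x + y) * (x + y) ∈ T
        have expand : σ (x + y) * (x + y) =
            (σ x * x + σ y * y) + (σ x * y + σ y * x) := by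
          rw [map_add]; noncomm_ring
        rw [expand]
        exact T.add_mem (T.add_mem hx hy) (hWT (haltF x y))
      zero_mem' := by
        show σ 0 * 0 ∈ T
        rw [mul_zero]
        exact T.zero_mem
      smul_mem' := by
        intro c x hx
        show σ (c • x) * (c • x) ∈ T
        rw [map_smul, smul_mul_smul_comm]
        exact T.smul_mem _ hx } with hS'
  have hS'mem : ∀ x : A, x ∈ S' ↔ σ x * x ∈ T := fun x => Iff.rfl
  have hsSetS' : sSet σ = (S' : Set A) := by
    ext x
    exact (hS x).trans (hS'mem x).symm
  -- the span equals the base change of S'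
  have hspanbc : Submodule.span K ((fun x : A => (1 : K) ⊗ₜ[F] x) '' sSet σ)
      = S'.baseChange K := by
    rw [Submodule.baseChange_eq_span]
    show _ = Submodule.span K (S'.map (TensorProduct.mk F K A 1) : Set (K ⊗[F] A))
    congr 1
    ext y
    constructor
    · rintro ⟨x, hx, rfl⟩
      exact ⟨x, by rwa [hsSetS'] at hx, rfl⟩
    · rintro ⟨x, hx, rfl⟩
      exact ⟨x, by rw [hsSetS']; exact hx, rfl⟩
  ext xt
  constructor
  · -- forward direction
    intro hxt
    rw [hSK] at hxt
    rw [← hTbc] at hxt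
    obtain ⟨b2, hb2⟩ := sq_basis_aux F K hodd
    set xi : Fin (Module.finrank F K) → A := fun i => gmap (b.coord i) xt with hxi
    have hrep : ∑ i, b i ⊗ₜ[F] xi i = xt := gmap_sum_repr b xt
    have hv : (∑ i, (b i ^ 2) ⊗ₜ[F] (σ (xi i) * xi i)) ∈ Submodule.baseChange K T := by
      have hd := hM3 xi
      rw [hrep] at hd
      have hd' : σK xt * xt - ∑ i, (b i ^ 2) ⊗ₜ[F] (σ (xi i) * xi i)
          ∈ Submodule.baseChange K T := le_trans hWKle (baseChange_mono' hWT) hd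
      have := Submodule.sub_mem _ hxt hd'
      simpa using this
    have hximem : ∀ i, σ (xi i) * xi i ∈ T := by
      intro i
      have := gmap_mem_of_mem_baseChange (b2.coord i) T hv
      have hgv : gmap (b2.coord i) (∑ j, (b j ^ 2) ⊗ₜ[F] (σ (xi j) * xi j))
          = σ (xi i) * xi i := by
        rw [map_sum]
        have : ∀ j, gmap (b2.coord i) ((b j ^ 2) ⊗ₜ[F] (σ (xi j) * xi j))
            = (b2.coord i) (b2 j) • (σ (xi j) * xi j) := by
          intro j
          rw [gmap_tmul, hb2 j]
        rw [Finset.sum_congr rfl fun j _ => this j]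
        simp [Module.Basis.coord_apply, Module.Basis.repr_self, Finsupp.single_apply]
      rwa [hgv] at this
    show xt ∈ Submodule.span K ((fun x : A => (1 : K) ⊗ₜ[F] x) '' sSet σ)
    rw [hspanbc, ← hrep]
    exact Submodule.sum_mem _ fun i _ =>
      Submodule.tmul_mem_baseChange_of_mem (b i) ((hS'mem (xi i)).mpr (hximem i))
  · -- backward direction
    intro hxt
    have hxt' : xt ∈ S'.baseChange K := by
      rw [← hspanbc]; exact hxt
    rw [hSK, ← hTbc]
    set xi : Fin (Module.finrank F K) → A := fun i => gmap (b.coord i) xt with hxi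
    have hrep : ∑ i, b i ⊗ₜ[F] xi i = xt := gmap_sum_repr b xt
    have hximem : ∀ i, σ (xi i) * xi i ∈ T := fun i =>
      (hS'mem _).mp (gmap_mem_of_mem_baseChange (b.coord i) S' hxt')
    have hd := hM3 xi
    rw [hrep] at hd
    have h1 : (∑ i, (b i ^ 2) ⊗ₜ[F] (σ (xi i) * xi i)) ∈ Submodule.baseChange K T :=
      Submodule.sum_mem _ fun i _ =>
        Submodule.tmul_mem_baseChange_of_mem _ (hximem i)
    have h2 : σK xt * xt - ∑ i, (b i ^ 2) ⊗ₜ[F] (σ (xi i) * xi i)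
        ∈ Submodule.baseChange K T := le_trans hWKle (baseChange_mono' hWT) hd
    have := Submodule.add_mem _ h2 h1
    simpa using this
end

section
/- Let F be a field of characteristic 2, let (A,σ) be a central simple F-algebra with orthogonal involution, and let K/F be a separable algebraic field extension (not necessarily finite). Then S(A_K, σ_K) equals the K-subspace of A_K = A ⊗_F K spanned by the elements x ⊗ 1 with x ∈ S(A,σ). -/
open scoped TensorProduct

section Aux1

variable {F B : Type*} [Field F] [Ring B] [Algebra F B]

/-- The `F`-submodule `F·1 + Alt(B,τ)`. -/
noncomputable def wSub (τ : B →ₗ[F] B) : Submodule F B :=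
  LinearMap.range (Algebra.linearMap F B) ⊔ LinearMap.range (LinearMap.id - τ)

lemma mem_sSet_iff (τ : B →ₗ[F] B) (x : B) : x ∈ sSet τ ↔ τ x * x ∈ wSub τ := by
  constructor
  · rintro ⟨α, y, hy⟩
    have h : τ x * x = algebraMap F B α + (y - τ y) := by
      rw [← hy]; abel
    rw [h]
    exact Submodule.add_mem _ (Submodule.mem_sup_left ⟨α, rfl⟩)
      (Submodule.mem_sup_right ⟨y, by simp⟩)
  · intro h
    rw [wSub, Submodule.mem_sup] at h
    obtain ⟨u, ⟨α, rfl⟩, v, ⟨y, rfl⟩, h⟩ := h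
    refine ⟨α, y, ?_⟩
    simp only [Algebra.linearMap_apply, LinearMap.sub_apply, LinearMap.id_apply] at h ⊢
    rw [← h]; abel

end Aux1

section Aux2

variable {F A K : Type*} [Field F] [Ring A] [Algebra F A]
  [Field K] [Algebra F K] (σ : A →ₗ[F] A)

lemma neg_self_of_charTwo [CharP K 2] {M : Type*} [AddCommGroup M] [Module K M] (m : M) :
    -m = m := by
  have h : m + m = 0 := by
    rw [← two_smul K m, show (2 : K) = 0 from CharP.cast_eq_zero K 2, zero_smul]
  exact neg_eq_of_add_eq_zero_left h

lemma baseChange_invol (hinv : ∀ x : A, σ (σ x) = x) (X : K ⊗[F] A) :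
    σ.baseChange K (σ.baseChange K X) = X := by
  induction X using TensorProduct.induction_on with
  | zero => simp
  | tmul c a => simp [hinv a]
  | add X Y hX hY => simp [hX, hY]

lemma baseChange_mul (hmul : ∀ x y : A, σ (x * y) = σ y * σ x) (X Y : K ⊗[F] A) :
    σ.baseChange K (X * Y) = σ.baseChange K Y * σ.baseChange K X := by
  induction X using TensorProduct.induction_on with
  | zero => simp
  | tmul c a =>
    induction Y using TensorProduct.induction_on with
    | zero => simp
    | tmul d b =>
      simp [Algebra.TensorProduct.tmul_mul_tmul, hmul, mul_comm c d]
    | add Y Z hY hZ => simp only [mul_add, add_mul, map_add, hY, hZ]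
  | add X Z hX hZ => simp only [mul_add, add_mul, map_add, hX, hZ]

lemma q_add [CharP K 2] (hmul : ∀ x y : A, σ (x * y) = σ y * σ x)
    (hinv : ∀ x : A, σ (σ x) = x) (X Y : K ⊗[F] A) :
    σ.baseChange K (X + Y) * (X + Y) - σ.baseChange K X * X - σ.baseChange K Y * Y
      ∈ LinearMap.range (LinearMap.id - σ.baseChange K) := by
  have h1 : σ.baseChange K (X + Y) * (X + Y) - σ.baseChange K X * X - σ.baseChange K Y * Y
      = σ.baseChange K X * Y + σ.baseChange K Y * X := by
    rw [map_add]; noncomm_ring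
  rw [h1]
  refine ⟨σ.baseChange K X * Y, ?_⟩
  have h2 : σ.baseChange K (σ.baseChange K X * Y) = σ.baseChange K Y * X := by
    rw [baseChange_mul σ hmul, baseChange_invol σ hinv]
  rw [LinearMap.sub_apply, LinearMap.id_apply, h2, sub_eq_add_neg, neg_self_of_charTwo (K := K)]

lemma sum_q [CharP K 2] (hmul : ∀ x y : A, σ (x * y) = σ y * σ x)
    (hinv : ∀ x : A, σ (σ x) = x) {ι : Type*} (s : Finset ι) (t : ι → K ⊗[F] A) :
    σ.baseChange K (∑ i ∈ s, t i) * (∑ i ∈ s, t i)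
        - ∑ i ∈ s, σ.baseChange K (t i) * t i
      ∈ LinearMap.range (LinearMap.id - σ.baseChange K) := by
  classical
  induction s using Finset.induction_on with
  | empty => simp
  | @insert a s ha ih =>
    rw [Finset.sum_insert ha, Finset.sum_insert ha]
    have hq := q_add σ hmul hinv (t a) (∑ i ∈ s, t i)
    have key : σ.baseChange K (t a + ∑ i ∈ s, t i) * (t a + ∑ i ∈ s, t i)
        - (σ.baseChange K (t a) * t a + ∑ i ∈ s, σ.baseChange K (t i) * t i)
        = (σ.baseChange K (t a + ∑ i ∈ s, t i) * (t a + ∑ i ∈ s, t i)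
            - σ.baseChange K (t a) * t a
            - σ.baseChange K (∑ i ∈ s, t i) * (∑ i ∈ s, t i))
          + (σ.baseChange K (∑ i ∈ s, t i) * (∑ i ∈ s, t i)
            - ∑ i ∈ s, σ.baseChange K (t i) * t i) := by
      abel
    rw [key]
    exact Submodule.add_mem _ hq ih

end Aux2

section Aux3

variable {F A K : Type*} [Field F] [Ring A] [Algebra F A]
  [Field K] [Algebra F K] (σ : A →ₗ[F] A)

lemma tmul_mem_wSub_baseChange {w : A} (hw : w ∈ wSub σ) (c : K) :
    c ⊗ₜ[F] w ∈ wSub (σ.baseChange K) := by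
  rw [wSub, Submodule.mem_sup] at hw
  obtain ⟨u, ⟨α, rfl⟩, v, ⟨y, rfl⟩, rfl⟩ := hw
  rw [TensorProduct.tmul_add]
  refine Submodule.add_mem _ (Submodule.mem_sup_left ⟨α • c, ?_⟩)
    (Submodule.mem_sup_right ⟨c ⊗ₜ[F] y, ?_⟩)
  · rw [Algebra.linearMap_apply, Algebra.TensorProduct.algebraMap_apply,
      Algebra.linearMap_apply, Algebra.algebraMap_eq_smul_one (A := A)]
    simp only [Algebra.algebraMap_self, RingHom.id_apply]
    rw [TensorProduct.smul_tmul]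
  · simp only [LinearMap.sub_apply, LinearMap.id_apply, LinearMap.baseChange_tmul]
    rw [TensorProduct.tmul_sub]

lemma one_mem_wSub : (1 : A) ∈ wSub σ :=
  Submodule.mem_sup_left ⟨1, by simp⟩

lemma sub_baseChange_mem (X : K ⊗[F] A) :
    X - σ.baseChange K X ∈ (wSub σ).baseChange K := by
  induction X using TensorProduct.induction_on with
  | zero => simp
  | tmul c a =>
    rw [LinearMap.baseChange_tmul, ← TensorProduct.tmul_sub]
    exact Submodule.tmul_mem_baseChange_of_mem c
      (Submodule.mem_sup_right ⟨a, by simp⟩)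
  | add X Y hX hY =>
    have h : X + Y - σ.baseChange K (X + Y)
        = (X - σ.baseChange K X) + (Y - σ.baseChange K Y) := by
      rw [map_add]; abel
    rw [h]
    exact Submodule.add_mem _ hX hY

lemma wSub_baseChange_le :
    wSub (σ.baseChange K) ≤ (wSub σ).baseChange K := by
  refine sup_le ?_ ?_
  · rintro _ ⟨c, rfl⟩
    rw [Algebra.linearMap_apply, Algebra.TensorProduct.algebraMap_apply]
    simpa using Submodule.tmul_mem_baseChange_of_mem (algebraMap K K c) (one_mem_wSub σ)
  · rintro _ ⟨X, rfl⟩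
    simpa using sub_baseChange_mem σ X

lemma vanish {r : ℕ} {t : Fin r → K} (ht : LinearIndependent F t)
    {U : Type*} [AddCommGroup U] [Module F U] {u : Fin r → U}
    (h : ∑ k, t k ⊗ₜ[F] u k = 0) : ∀ k, u k = 0 := by
  intro k
  classical
  set V := Submodule.span F (Set.range t) with hV
  let bV : Module.Basis (Fin r) F V := Module.Basis.span ht
  obtain ⟨q, hq⟩ := Submodule.exists_isCompl V
  let proj : K →ₗ[F] V := V.linearProjOfIsCompl q hq
  let f : K →ₗ[F] F := bV.coord k ∘ₗ proj
  let g : K ⊗[F] U →ₗ[F] U := (TensorProduct.lid F U).toLinearMap ∘ₗ LinearMap.rTensor U f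
  have hg : g (∑ l, t l ⊗ₜ[F] u l) = ∑ l, f (t l) • u l := by
    rw [map_sum]
    refine Finset.sum_congr rfl fun l _ => ?_
    simp [g, LinearMap.rTensor_tmul, TensorProduct.lid_tmul]
  have hf : ∀ l, f (t l) = if l = k then 1 else 0 := by
    intro l
    have hmem : t l ∈ V := Submodule.subset_span ⟨l, rfl⟩
    have hproj : proj (t l) = ⟨t l, hmem⟩ :=
      Submodule.linearProjOfIsCompl_apply_left hq ⟨t l, hmem⟩
    have hb : (⟨t l, hmem⟩ : V) = bV l := by
      ext; rw [Module.Basis.span_apply]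
    simp [f, hproj, hb, Module.Basis.coord_apply, Module.Basis.repr_self, Finsupp.single_apply]
  rw [h, map_zero] at hg
  have : (0 : U) = u k := by
    rw [hg]
    simp only [hf, ite_smul, one_smul, zero_smul]
    rw [Finset.sum_ite_eq' Finset.univ k u]
    simp
  exact this.symm

lemma exists_rep (X : K ⊗[F] A) :
    ∃ (r : ℕ) (z : Fin r → K) (x : Fin r → A),
      LinearIndependent F z ∧ X = ∑ k, z k ⊗ₜ[F] x k := by
  classical
  obtain ⟨S, rfl⟩ := TensorProduct.exists_finset X
  set V := Submodule.span F ((S.image Prod.fst : Finset K) : Set K) with hV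
  haveI : FiniteDimensional F V :=
    FiniteDimensional.span_of_finite F (Finset.finite_toSet _)
  set r := Module.finrank F V with hr
  let bV : Module.Basis (Fin r) F V := Module.finBasis F V
  obtain ⟨q, hq⟩ := Submodule.exists_isCompl V
  let proj : K →ₗ[F] V := V.linearProjOfIsCompl q hq
  have hmem : ∀ p ∈ S, p.1 ∈ V := fun p hp =>
    Submodule.subset_span (by simpa using Finset.mem_image_of_mem Prod.fst hp)
  refine ⟨r, fun k => (bV k : K),
    fun k => ∑ p ∈ S, (bV.repr (proj p.1) k) • p.2,
    bV.linearIndependent.map' V.subtype (Submodule.ker_subtype V), ?_⟩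
  have step : ∀ p ∈ S, (p.1 ⊗ₜ[F] p.2 : K ⊗[F] A)
      = ∑ k, ((bV k : K) ⊗ₜ[F] ((bV.repr (proj p.1) k) • p.2)) := by
    intro p hp
    have hproj : proj p.1 = ⟨p.1, hmem p hp⟩ :=
      Submodule.linearProjOfIsCompl_apply_left hq ⟨p.1, hmem p hp⟩
    have h1 : p.1 = ∑ k, (bV.repr (proj p.1) k) • (bV k : K) := by
      calc p.1 = ((proj p.1 : V) : K) := by rw [hproj]
        _ = ((∑ k, (bV.repr (proj p.1) k) • bV k : V) : K) := by rw [bV.sum_repr]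
        _ = ∑ k, (bV.repr (proj p.1) k) • (bV k : K) := by
            simp [AddSubmonoidClass.coe_finset_sum, -Module.Basis.sum_repr]
    conv_lhs => rw [h1]
    rw [TensorProduct.sum_tmul]
    refine Finset.sum_congr rfl fun l _ => ?_
    rw [TensorProduct.smul_tmul]
  rw [Finset.sum_congr rfl step, Finset.sum_comm]
  refine Finset.sum_congr rfl fun k _ => ?_
  rw [TensorProduct.tmul_sum]

end Aux3

theorem stmt4 {F A K : Type*} [Field F] [CharP F 2] [Ring A] [Algebra F A]
    [FiniteDimensional F A]
    (hcentral : ∀ z : A, (∀ y : A, z * y = y * z) → ∃ a : F, algebraMap F A a = z)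
    (hsimple : IsSimpleOrder (TwoSidedIdeal A))
    (σ : A →ₗ[F] A) (hmul : ∀ x y : A, σ (x * y) = σ y * σ x) (hinv : ∀ x : A, σ (σ x) = x)
    (horth : IsOrthogonal σ)
    [Field K] [Algebra F K] [Algebra.IsSeparable F K] :
    sSet (LinearMap.baseChange K σ) =
      ↑(Submodule.span K ((fun x : A => (1 : K) ⊗ₜ[F] x) '' sSet σ)) := by
  classical
  haveI : CharP K 2 := charP_of_injective_algebraMap (algebraMap F K).injective 2
  haveI : Fact (Nat.Prime 2) := ⟨Nat.prime_two⟩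
  apply Set.eq_of_subset_of_subset
  · -- `S(A_K, σ_K) ⊆ span`
    intro X hX
    replace hX : X ∈ sSet (σ.baseChange K) := hX
    rw [mem_sSet_iff] at hX
    obtain ⟨r, z, x, hz, rfl⟩ := exists_rep X
    -- the diagonal sum
    have hdiag : ∀ k, σ.baseChange K (z k ⊗ₜ[F] x k) * (z k ⊗ₜ[F] x k)
        = (z k ^ 2) ⊗ₜ[F] (σ (x k) * x k) := by
      intro k
      rw [LinearMap.baseChange_tmul, Algebra.TensorProduct.tmul_mul_tmul, sq]
    have hsum := sum_q σ hmul hinv Finset.univ (fun k => z k ⊗ₜ[F] x k)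
    simp only [hdiag] at hsum
    have hD : (∑ k, (z k ^ 2) ⊗ₜ[F] (σ (x k) * x k)) ∈ wSub (σ.baseChange K) := by
      have h1 := Submodule.sub_mem _ hX (Submodule.mem_sup_right hsum)
      simpa using h1
    have hBC : (∑ k, (z k ^ 2) ⊗ₜ[F] (σ (x k) * x k)) ∈ (wSub σ).baseChange K :=
      wSub_baseChange_le σ hD
    -- apply the base change of the quotient map
    have hker : ∀ v ∈ (wSub σ).baseChange K, (wSub σ).mkQ.baseChange K v = 0 := by
      intro v hv
      refine Submodule.span_induction (p := fun v _ => (wSub σ).mkQ.baseChange K v = 0) ?_ (map_zero _) (fun a b _ _ ha hb => by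
        rw [map_add, ha, hb, add_zero]) (fun c a _ ha => by rw [map_smul, ha, smul_zero]) (Submodule.baseChange_eq_span K (wSub σ) ▸ hv)
      rintro _ ⟨w, hw, rfl⟩
      simp only [TensorProduct.mk_apply, LinearMap.baseChange_tmul, Submodule.mkQ_apply]
      rw [(Submodule.Quotient.mk_eq_zero _).2 hw, TensorProduct.tmul_zero]
    have h0 := hker _ hBC
    rw [map_sum] at h0
    simp only [LinearMap.baseChange_tmul, Submodule.mkQ_apply] at h0
    have hzsq : LinearIndependent F (fun k => z k ^ 2) := by
      have h2 := hz.map_pow_expChar_pow_of_isSeparable 2 1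
      simpa using h2
    have hw : ∀ k, σ (x k) * x k ∈ wSub σ := by
      intro k
      have := vanish hzsq h0 k
      rwa [Submodule.Quotient.mk_eq_zero] at this
    have hx : ∀ k, x k ∈ sSet σ := fun k => (mem_sSet_iff σ (x k)).2 (hw k)
    refine Submodule.sum_mem _ fun k _ => ?_
    have hzx : z k ⊗ₜ[F] x k = z k • ((1 : K) ⊗ₜ[F] x k) := by
      rw [TensorProduct.smul_tmul', smul_eq_mul, mul_one]
    rw [hzx]
    exact Submodule.smul_mem _ _ (Submodule.subset_span ⟨x k, hx k, rfl⟩)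
  · -- span ⊆ `S(A_K, σ_K)`
    intro X hX
    rw [SetLike.mem_coe, Submodule.mem_span_set'] at hX
    obtain ⟨n, f, g, rfl⟩ := hX
    have hmem : ∀ i, ∃ x, x ∈ sSet σ ∧ (1 : K) ⊗ₜ[F] x = ↑(g i) := fun i => (g i).2
    choose s hs heq using hmem
    have hre : (∑ i, f i • ((g i : K ⊗[F] A))) = ∑ i, f i ⊗ₜ[F] s i := by
      refine Finset.sum_congr rfl fun i _ => ?_
      rw [← heq i, TensorProduct.smul_tmul', smul_eq_mul, mul_one]
    show _ ∈ sSet (σ.baseChange K)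
    rw [mem_sSet_iff, hre]
    have hsum := sum_q σ hmul hinv Finset.univ (fun i => f i ⊗ₜ[F] s i)
    have hterm : ∀ i, σ.baseChange K (f i ⊗ₜ[F] s i) * (f i ⊗ₜ[F] s i)
        ∈ wSub (σ.baseChange K) := by
      intro i
      rw [LinearMap.baseChange_tmul, Algebra.TensorProduct.tmul_mul_tmul, ← sq]
      exact tmul_mem_wSub_baseChange σ ((mem_sSet_iff σ (s i)).1 (hs i)) (f i ^ 2)
    have hT : σ.baseChange K (∑ i, f i ⊗ₜ[F] s i) * (∑ i, f i ⊗ₜ[F] s i)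
        = (σ.baseChange K (∑ i, f i ⊗ₜ[F] s i) * (∑ i, f i ⊗ₜ[F] s i)
            - ∑ i, σ.baseChange K (f i ⊗ₜ[F] s i) * (f i ⊗ₜ[F] s i))
          + ∑ i, σ.baseChange K (f i ⊗ₜ[F] s i) * (f i ⊗ₜ[F] s i) := by
      abel
    rw [hT]
    exact Submodule.add_mem _ (Submodule.mem_sup_right hsum)
      (Submodule.sum_mem _ fun i _ => hterm i)
end

section
/- Let F be a field of characteristic 2, let (A,σ) be a central simple F-algebra with orthogonal involution, and let K/F be a finite field extension of odd degree. Then σ is direct if and only if σ_K is direct. -/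
open scoped TensorProduct

section Aux

lemma exists_rep_s7 {F K M ι : Type*} [Field F] [Field K] [Algebra F K] [Fintype ι]
    [AddCommGroup M] [Module F M] (b : Module.Basis ι F K) (x : K ⊗[F] M) :
    ∃ a : ι → M, x = ∑ i, b i ⊗ₜ[F] a i := by
  induction x using TensorProduct.induction_on with
  | zero => exact ⟨0, by simp⟩
  | tmul k m =>
      refine ⟨fun i => b.repr k i • m, ?_⟩
      conv_lhs => rw [← b.sum_repr k]
      rw [TensorProduct.sum_tmul]
      refine Finset.sum_congr rfl fun i _ => ?_
      rw [TensorProduct.smul_tmul]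
  | add x y hx hy =>
      obtain ⟨a, rfl⟩ := hx
      obtain ⟨a', rfl⟩ := hy
      exact ⟨a + a', by simp [TensorProduct.tmul_add, Finset.sum_add_distrib]⟩

lemma coeff_zero {F K M ι : Type*} [Field F] [Field K] [Algebra F K] [Fintype ι] [DecidableEq ι]
    [AddCommGroup M] [Module F M] (b : Module.Basis ι F K) (w : ι → M)
    (h : ∑ i, b i ⊗ₜ[F] w i = 0) : ∀ j, w j = 0 := by
  intro j
  have h2 := congrArg (fun z => TensorProduct.lid F M (LinearMap.rTensor M (b.coord j) z)) h
  simpa [LinearMap.rTensor_tmul, TensorProduct.lid_tmul, Module.Basis.coord_apply, Module.Basis.repr_self,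
    Finsupp.single_apply, eq_comm, Finset.sum_ite_eq] using h2

open IntermediateField Polynomial Module in
lemma span_sq_top (F K : Type*) [Field F] [CharP F 2] [Field K] [Algebra F K]
    [FiniteDimensional F K] (hodd : Odd (Module.finrank F K)) :
    Submodule.span F {x : K | ∃ y : K, y ^ 2 = x} = ⊤ := by
  set S : Set K := {x : K | ∃ y : K, y ^ 2 = x} with hS
  set L : IntermediateField F K := IntermediateField.adjoin F S with hL
  have hLtop : L = ⊤ := by
    rw [eq_top_iff]
    intro x _
    have hx2 : x ^ 2 ∈ L := IntermediateField.subset_adjoin F S ⟨x, rfl⟩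
    have hint : IsIntegral ↥L x := IsIntegral.of_finite ↥L x
    have hdvd : minpoly ↥L x ∣ (X ^ 2 - C (⟨x ^ 2, hx2⟩ : ↥L)) := by
      apply minpoly.dvd
      simp only [map_sub, map_pow, aeval_X, aeval_C]
      rw [sub_eq_zero]
      rfl
    have hne : (X ^ 2 - C (⟨x ^ 2, hx2⟩ : ↥L)) ≠ 0 := by
      intro h
      have := congrArg natDegree h
      rw [natDegree_X_pow_sub_C, natDegree_zero] at this
      omega
    have hdeg : (minpoly ↥L x).natDegree ≤ 2 := by
      have := Polynomial.natDegree_le_of_dvd hdvd hne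
      rwa [natDegree_X_pow_sub_C] at this
    have hpos : 0 < (minpoly ↥L x).natDegree := minpoly.natDegree_pos hint
    have hrank : Module.finrank ↥L ↥L⟮x⟯ = (minpoly ↥L x).natDegree :=
      IntermediateField.adjoin.finrank hint
    have hdvd2 : Module.finrank ↥L ↥L⟮x⟯ ∣ Module.finrank F K := by
      have t1 : Module.finrank F ↥L * Module.finrank ↥L K = Module.finrank F K :=
        Module.finrank_mul_finrank F ↥L K
      have t2 : Module.finrank ↥L ↥L⟮x⟯ * Module.finrank ↥L⟮x⟯ K = Module.finrank ↥L K :=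
        Module.finrank_mul_finrank ↥L ↥L⟮x⟯ K
      exact ⟨Module.finrank ↥L⟮x⟯ K * Module.finrank F ↥L, by rw [← t1, ← t2]; ring⟩
    have h1 : Module.finrank ↥L ↥L⟮x⟯ = 1 := by
      rcases Nat.lt_or_ge (minpoly ↥L x).natDegree 2 with h | h
      · rw [hrank]; omega
      · have h2 : (minpoly ↥L x).natDegree = 2 := le_antisymm hdeg h
        rw [hrank, h2] at hdvd2
        exfalso
        rw [Nat.odd_iff] at hodd
        omega
    have hbot : x ∈ (⊥ : IntermediateField ↥L K) :=
      IntermediateField.finrank_adjoin_simple_eq_one_iff.mp h1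
    rw [IntermediateField.mem_bot] at hbot
    obtain ⟨l, hl⟩ := hbot
    rw [← hl]
    exact l.2
  apply top_le_iff.mp
  intro x _
  have hx : x ∈ Algebra.adjoin F S := by
    have h := IntermediateField.adjoin_toSubalgebra_of_isAlgebraic
      (S := S) (fun y _ => Algebra.IsAlgebraic.isAlgebraic (R := F) y)
    have : x ∈ L := by rw [hLtop]; trivial
    rw [← h]
    exact this
  have hmul : ∀ a b : K, a ∈ Submodule.span F S → b ∈ Submodule.span F S →
      a * b ∈ Submodule.span F S := by
    intro a b ha hb
    have h := Submodule.mul_mem_mul ha hb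
    rw [Submodule.span_mul_span] at h
    refine Submodule.span_le.mpr ?_ h
    rintro z ⟨u, ⟨u', rfl⟩, v, ⟨v', rfl⟩, rfl⟩
    exact Submodule.subset_span ⟨u' * v', by ring⟩
  have h1m : (1 : K) ∈ Submodule.span F S := Submodule.subset_span ⟨1, one_pow 2⟩
  exact Algebra.adjoin_le (S := (Submodule.span F S).toSubalgebra h1m hmul)
    (fun z hz => Submodule.subset_span hz) hx

end Aux

/-- An involution is direct if the only `x` with `σ(x)x ∈ Alt(A,σ)` is `x = 0`. -/
def IsDirect {F A : Type*} [Field F] [Ring A] [Algebra F A] (σ : A →ₗ[F] A) : Prop :=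
  ∀ x : A, σ x * x ∈ altSet σ → x = 0

theorem stmt7 {F A K : Type*} [Field F] [CharP F 2] [Ring A] [Algebra F A]
    [FiniteDimensional F A]
    (hcentral : ∀ z : A, (∀ y : A, z * y = y * z) → ∃ a : F, algebraMap F A a = z)
    (hsimple : IsSimpleOrder (TwoSidedIdeal A))
    (σ : A →ₗ[F] A) (hmul : ∀ x y : A, σ (x * y) = σ y * σ x) (hinv : ∀ x : A, σ (σ x) = x)
    (horth : IsOrthogonal σ)
    [Field K] [Algebra F K] [FiniteDimensional F K] (hodd : Odd (Module.finrank F K)) :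
    IsDirect σ ↔ IsDirect (LinearMap.baseChange K σ) := by
  classical
  have hKchar : CharP K 2 := charP_of_injective_algebraMap (algebraMap F K).injective 2
  have hneg : ∀ y : A, -y = y := by
    intro y
    rw [neg_eq_iff_add_eq_zero]
    calc y + y = (1 : F) • y + (1 : F) • y := by rw [one_smul]
    _ = ((2 : ℕ) : F) • y := by rw [← add_smul]; norm_num
    _ = 0 := by rw [CharP.cast_eq_zero F 2, zero_smul]
  constructor
  · -- hard direction
    intro hd x hx
    set n := Module.finrank F K with hn
    let b : Module.Basis (Fin n) F K := Module.finBasis F K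
    obtain ⟨a, rfl⟩ := exists_rep_s7 b x
    -- the squares of b form a basis
    have hspan : ⊤ ≤ Submodule.span F (Set.range fun i => b i ^ 2) := by
      rw [← span_sq_top F K hodd]
      refine Submodule.span_le.mpr ?_
      rintro z ⟨y, rfl⟩
      have hy2 : y ^ 2 = ∑ i, (b.repr y i) ^ 2 • (b i ^ 2) := by
        conv_lhs => rw [← b.sum_repr y]
        rw [CharTwo.sum_sq]
        exact Finset.sum_congr rfl fun i _ => smul_pow _ _ _
      rw [SetLike.mem_coe, hy2]
      exact Submodule.sum_mem _ fun i _ =>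
        Submodule.smul_mem _ _ (Submodule.subset_span ⟨i, rfl⟩)
    let b2 : Module.Basis (Fin n) F K := basisOfTopLeSpanOfCardEqFinrank _ hspan (by simp [hn])
    have hb2 : ∀ i, b2 i = b i ^ 2 := fun i => by
      rw [coe_basisOfTopLeSpanOfCardEqFinrank]
    -- quotient by Alt
    set N : Submodule F A := LinearMap.range (LinearMap.id - σ) with hNdef
    have hNalt : ∀ y : A, y ∈ altSet σ ↔ y ∈ N := by
      intro y
      constructor
      · rintro ⟨z, rfl⟩; exact ⟨z, by simp⟩
      · rintro ⟨z, rfl⟩; exact ⟨z, by simp⟩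
    set π := N.mkQ with hπdef
    have hπσ : π ∘ₗ σ = π := by
      ext z
      rw [hπdef]
      simp only [LinearMap.comp_apply, Submodule.mkQ_apply]
      rw [Submodule.Quotient.eq]
      refine ⟨z, ?_⟩
      simp only [LinearMap.sub_apply, LinearMap.id_apply]
      rw [← neg_sub z (σ z), hneg]
    have hπalt : ∀ z ∈ altSet (LinearMap.baseChange K σ), LinearMap.baseChange K π z = 0 := by
      rintro _ ⟨y, rfl⟩
      rw [map_sub, ← LinearMap.comp_apply, ← LinearMap.baseChange_comp σ π, hπσ, sub_self]
    have h0 := hπalt _ hx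
    -- compute the image
    have hexp : LinearMap.baseChange K π
        ((LinearMap.baseChange K σ (∑ i, b i ⊗ₜ[F] a i)) * (∑ i, b i ⊗ₜ[F] a i)) =
        ∑ p ∈ (Finset.univ ×ˢ Finset.univ : Finset (Fin n × Fin n)),
          (b p.1 * b p.2) ⊗ₜ[F] π (σ (a p.1) * a p.2) := by
      rw [map_sum]
      simp only [LinearMap.baseChange_tmul]
      rw [Finset.sum_mul_sum]
      rw [map_sum]
      rw [Finset.sum_product]
      refine Finset.sum_congr rfl fun i _ => ?_
      rw [map_sum]
      refine Finset.sum_congr rfl fun j _ => ?_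
      rw [Algebra.TensorProduct.tmul_mul_tmul, LinearMap.baseChange_tmul]
    rw [hexp] at h0
    rw [← Finset.diag_union_offDiag, Finset.sum_union (Finset.disjoint_diag_offDiag _)] at h0
    have hoff : ∑ p ∈ (Finset.univ : Finset (Fin n)).offDiag,
        (b p.1 * b p.2) ⊗ₜ[F] π (σ (a p.1) * a p.2) = 0 := by
      refine Finset.sum_involution (fun p _ => Prod.swap p) ?_ ?_ ?_ ?_
      · intro p hp
        have hmem : σ (a p.1) * a p.2 + σ (a p.2) * a p.1 ∈ N := by
          refine ⟨σ (a p.1) * a p.2, ?_⟩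
          simp only [LinearMap.sub_apply, LinearMap.id_apply]
          rw [hmul, hinv]
          rw [sub_eq_add_neg, hneg]
        have hπ0 : (π (σ (a p.1) * a p.2) + π (σ (a p.2) * a p.1)) = 0 := by
          rw [← map_add, hπdef, Submodule.mkQ_apply, Submodule.Quotient.mk_eq_zero]
          exact hmem
        have hsw : (b p.swap.1 * b p.swap.2) ⊗ₜ[F] π (σ (a p.swap.1) * a p.swap.2)
            = (b p.1 * b p.2) ⊗ₜ[F] π (σ (a p.2) * a p.1) := by
          show (b p.2 * b p.1) ⊗ₜ[F] π (σ (a p.2) * a p.1)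
              = (b p.1 * b p.2) ⊗ₜ[F] π (σ (a p.2) * a p.1)
          rw [mul_comm]
        rw [hsw, ← TensorProduct.tmul_add, hπ0, TensorProduct.tmul_zero]
      · intro p hp _
        rw [Finset.mem_offDiag] at hp
        intro hc
        exact hp.2.2 (congrArg Prod.fst hc).symm
      · intro p hp
        rw [Finset.mem_offDiag] at hp ⊢
        exact ⟨Finset.mem_univ _, Finset.mem_univ _, fun h => hp.2.2 h.symm⟩
      · intro p hp; rfl
    rw [hoff, add_zero, Finset.sum_diag] at h0
    have hdiag : ∀ i : Fin n, π (σ (a i) * a i) = 0 := by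
      apply coeff_zero b2
      rw [← h0]
      refine Finset.sum_congr rfl fun i _ => ?_
      rw [hb2, sq]
    have hzero : ∀ i, a i = 0 := by
      intro i
      apply hd
      have hN : σ (a i) * a i ∈ N := by
        have := hdiag i
        rwa [hπdef, Submodule.mkQ_apply, Submodule.Quotient.mk_eq_zero] at this
      exact (hNalt _).mpr hN
    simp [hzero]
  · -- easy direction
    intro hdK x hx
    obtain ⟨y, hy⟩ := hx
    have hmem : LinearMap.baseChange K σ ((1 : K) ⊗ₜ[F] x) * ((1 : K) ⊗ₜ[F] x)
        ∈ altSet (LinearMap.baseChange K σ) := by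
      refine ⟨(1 : K) ⊗ₜ[F] y, ?_⟩
      rw [LinearMap.baseChange_tmul, Algebra.TensorProduct.tmul_mul_tmul, one_mul, hy,
        LinearMap.baseChange_tmul, ← TensorProduct.tmul_sub]
    have h := hdK _ hmem
    -- deduce x = 0
    have hli : LinearIndepOn F id ({1} : Set K) :=
      (linearIndepOn_singleton_iff F).mpr one_ne_zero
    have hmem1 : (1 : K) ∈ hli.extend (Set.subset_univ _) :=
      hli.subset_extend _ rfl
    let c : Module.Basis _ F K := Module.Basis.extend hli
    have hc1 : c ⟨1, hmem1⟩ = 1 := Module.Basis.extend_apply_self hli ⟨1, hmem1⟩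
    rw [← hc1] at h
    have h2 := congrArg (fun z => TensorProduct.lid F A
      (LinearMap.rTensor A (c.coord ⟨1, hmem1⟩) z)) h
    simpa [LinearMap.rTensor_tmul, TensorProduct.lid_tmul, Module.Basis.coord_apply,
      Module.Basis.repr_self] using h2
end
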